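/- Assume X_A and X_B are conditionally independent given Y, Pr[Y=y|X_B=x_B] > 0 for all x_B, y, and the prior is stable. If x_A* ∈ Σ_A and q̂ ∈ Δ_Σ satisfy q̂ ≠ (Pr[Y=y|X_A=x_A*])_y, then Σ_{x_B} Pr[X_B=x_B|X_A=x_A*]·log(Σ_y q̂(y)·Pr[Y=y|X_B=x_B]/Pr[Y=y]) < Σ_{x_B} Pr[X_B=x_B|X_A=x_A*]·log(K(x_A*,x_B)). That is, given that Bob reports truthfully, an agent who observes X_A = x_A* and misreports her forecast earns strictly less conditional expected payment in the common ground mechanism than by reporting her Bayesian posterior. -/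

import Mathlib

noncomputable section

variable {SA SB S : Type*}

/-- Joint probability `Pr[X_A = a, X_B = b]` induced by the joint pmf `ν` of `(X_A, X_B, Y)`. -/
def jAB [Fintype S] (ν : SA → SB → S → ℝ) (a : SA) (b : SB) : ℝ := ∑ y, ν a b y

/-- Joint probability `Pr[X_A = a, Y = y]`. -/
def jAY [Fintype SB] (ν : SA → SB → S → ℝ) (a : SA) (y : S) : ℝ := ∑ b, ν a b y

/-- Joint probability `Pr[X_B = b, Y = y]`. -/
def jBY [Fintype SA] (ν : SA → SB → S → ℝ) (b : SB) (y : S) : ℝ := ∑ a, ν a b y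

/-- Marginal probability `Pr[X_A = a]`. -/
def prA [Fintype SB] [Fintype S] (ν : SA → SB → S → ℝ) (a : SA) : ℝ := ∑ b, ∑ y, ν a b y

/-- Marginal probability `Pr[X_B = b]`. -/
def prB [Fintype SA] [Fintype S] (ν : SA → SB → S → ℝ) (b : SB) : ℝ := ∑ a, ∑ y, ν a b y

/-- Marginal probability `Pr[Y = y]`. -/
def prY [Fintype SA] [Fintype SB] (ν : SA → SB → S → ℝ) (y : S) : ℝ := ∑ a, ∑ b, ν a b y

/-- Pointwise mutual information `K(a,b) = Pr[a,b]/(Pr[a]·Pr[b])`. -/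
def K [Fintype SA] [Fintype SB] [Fintype S] (ν : SA → SB → S → ℝ) (a : SA) (b : SB) : ℝ :=
  jAB ν a b / (prA ν a * prB ν b)

/-- Conditional probability `Pr[Y = y | X_A = a]`. -/
def condA [Fintype SB] [Fintype S] (ν : SA → SB → S → ℝ) (a : SA) (y : S) : ℝ :=
  jAY ν a y / prA ν a

/-- Conditional probability `Pr[Y = y | X_B = b]`. -/
def condB [Fintype SA] [Fintype S] (ν : SA → SB → S → ℝ) (b : SB) (y : S) : ℝ :=
  jBY ν b y / prB ν b

/-- `X_A` and `X_B` are conditionally independent given `Y`: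
`Pr[a, b | y] = Pr[a | y] · Pr[b | y]` for all `a, b, y`. -/
def CondIndep [Fintype SA] [Fintype SB] (ν : SA → SB → S → ℝ) : Prop :=
  ∀ a b y, ν a b y / prY ν y = (jAY ν a y / prY ν y) * (jBY ν b y / prY ν y)

/-- `ν` is a probability mass function. -/
def IsPMF [Fintype SA] [Fintype SB] [Fintype S] (ν : SA → SB → S → ℝ) : Prop :=
  (∀ a b y, 0 ≤ ν a b y) ∧ ∑ a, ∑ b, ∑ y, ν a b y = 1

/-- `p` is a probability vector: nonnegative entries summing to `1`. -/
def IsProbVec {T : Type*} [Fintype T] (p : T → ℝ) : Prop := (∀ t, 0 ≤ p t) ∧ ∑ t, p t = 1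

/-- The convex conjugate `f*(x) = sup_t (t·x − f(t))`, as a real-valued supremum. -/
def fconj (f : ℝ → ℝ) (x : ℝ) : ℝ := sSup (Set.range fun t => t * x - f t)

/-- `c` is a subgradient of `f` at `t`: `f(s) ≥ f(t) + c·(s − t)` for all `s`. -/
def IsSubgradientAt (f : ℝ → ℝ) (t c : ℝ) : Prop := ∀ s : ℝ, f t + c * (s - t) ≤ f s

/-- The f-mutual information `MI^f(X_A;X_B) = Σ_{a,b} Pr[a]·Pr[b]·f(K(a,b))`. -/
def MIf [Fintype SA] [Fintype SB] [Fintype S] (f : ℝ → ℝ) (ν : SA → SB → S → ℝ) : ℝ :=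
  ∑ a, ∑ b, prA ν a * prB ν b * f (K ν a b)

/-- The agreement `g(a,b) = Σ_y h_A(a)(y)·h_B(b)(y)/p(y)`. -/
def gagr [Fintype S] (hA : SA → S → ℝ) (hB : SB → S → ℝ) (p : S → ℝ) (a : SA) (b : SB) : ℝ :=
  ∑ y, hA a y * hB b y / p y

/-- Expected `f`-mutual information gain
`MIG^f(h_A,h_B,p) = Σ Pr[a,b]·f'(g(a,b)) − Σ Pr[a]·Pr[b]·f*(f'(g(a,b)))`. -/
def MIG [Fintype SA] [Fintype SB] [Fintype S] (f : ℝ → ℝ) (ν : SA → SB → S → ℝ)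
    (hA : SA → S → ℝ) (hB : SB → S → ℝ) (p : S → ℝ) : ℝ :=
  ∑ a, ∑ b, jAB ν a b * deriv f (gagr hA hB p a b)
    - ∑ a, ∑ b, prA ν a * prB ν b * fconj f (deriv f (gagr hA hB p a b))

/-- Each agent's expected payment in the multi-task common ground mechanism `MCG(f)`. -/
def Pay [Fintype SA] [Fintype SB] [Fintype S] (f : ℝ → ℝ) (ν : SA → SB → S → ℝ)
    (sA : SA → S → ℝ) (sB : SB → S → ℝ) : ℝ :=
  MIG f ν sA sB (prY ν)

/-- `({a^{x_A}}, {b^{x_B}}, r)` is a solution of the agreement system: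
probability vectors, `r` strictly positive, with
`Σ_y a^{x_A}(y)·b^{x_B}(y)/r(y) = K(x_A,x_B)` for all `x_A, x_B`. -/
def AgreementSolution [Fintype SA] [Fintype SB] [Fintype S] (ν : SA → SB → S → ℝ)
    (a : SA → S → ℝ) (b : SB → S → ℝ) (r : S → ℝ) : Prop :=
  (∀ xa, IsProbVec (a xa)) ∧ (∀ xb, IsProbVec (b xb)) ∧ IsProbVec r ∧ (∀ y, 0 < r y) ∧
    ∀ xa xb, (∑ y, a xa y * b xb y / r y) = K ν xa xb

/-- The prior is well-defined: any two solutions of the agreement system coincide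
up to a permutation of `Σ`. -/
def WellDefinedPrior [Fintype SA] [Fintype SB] [Fintype S] (ν : SA → SB → S → ℝ) : Prop :=
  ∀ (a : SA → S → ℝ) (b : SB → S → ℝ) (r : S → ℝ)
    (c : SA → S → ℝ) (d : SB → S → ℝ) (r' : S → ℝ),
    AgreementSolution ν a b r → AgreementSolution ν c d r' →
    ∃ π : Equiv.Perm S, ∀ y, r (π y) = r' y ∧ (∀ xa, a xa (π y) = c xa y)
      ∧ (∀ xb, b xb (π y) = d xb y)

/-- The prior is stable: fixing the truthful `A`-side (resp. `B`-side) of the agreement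
system, the only solution for the other side is the truthful one. -/
def StablePrior [Fintype SA] [Fintype SB] [Fintype S] (ν : SA → SB → S → ℝ) : Prop :=
  (∀ b : SB → S → ℝ, (∀ xb, IsProbVec (b xb)) →
    (∀ xa xb, (∑ y, condA ν xa y * b xb y / prY ν y) = K ν xa xb) →
    ∀ xb y, b xb y = condB ν xb y) ∧
  (∀ a : SA → S → ℝ, (∀ xa, IsProbVec (a xa)) →
    (∀ xa xb, (∑ y, a xa y * condB ν xb y / prY ν y) = K ν xa xb) →
    ∀ xa y, a xa y = condA ν xa y)

/-- Strict truthfulness of the common ground mechanism: under conditional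
independence, positive posteriors `Pr[Y=y|X_B=b] > 0`, and a stable prior, an agent
who observes `X_A = x_A*` and misreports (`q̂ ≠ (Pr[Y=y|X_A=x_A*])_y`) earns strictly
less conditional expected payment than by reporting her Bayesian posterior (whose
conditional expected payment is `Σ_{x_B} Pr[x_B|x_A*]·log K(x_A*,x_B)`). -/
theorem stmt_13 [Fintype SA] [Fintype SB] [Fintype S] [Nonempty SA] [Nonempty SB] [Nonempty S]
    (ν : SA → SB → S → ℝ) (hν : IsPMF ν)
    (hAB : ∀ a b, 0 < jAB ν a b) (hY : ∀ y, 0 < prY ν y)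
    (hci : CondIndep ν) (hBY : ∀ b y, 0 < condB ν b y) (hst : StablePrior ν)
    (a0 : SA) (q : S → ℝ) (hq : IsProbVec q)
    (hne : q ≠ fun y => condA ν a0 y) :
    ∑ b, (jAB ν a0 b / prA ν a0) * Real.log (∑ y, q y * condB ν b y / prY ν y)
      < ∑ b, (jAB ν a0 b / prA ν a0) * Real.log (K ν a0 b) := by
  classical
  obtain ⟨hν0, hν1⟩ := hν
  -- basic positivity
  have hprA : ∀ a : SA, 0 < prA ν a := by
    intro a
    have h : prA ν a = ∑ b, jAB ν a b := rfl
    rw [h]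
    exact Finset.sum_pos (fun b _ => hAB a b) Finset.univ_nonempty
  have hprB : ∀ b : SB, 0 < prB ν b := by
    intro b
    have h : prB ν b = ∑ a, jAB ν a b := rfl
    rw [h]
    exact Finset.sum_pos (fun a _ => hAB a b) Finset.univ_nonempty
  have hK : ∀ b, 0 < K ν a0 b := fun b =>
    div_pos (hAB a0 b) (mul_pos (hprA a0) (hprB b))
  -- condA is a probability vector
  have hjAYsum : ∀ a : SA, ∑ y, jAY ν a y = prA ν a := by
    intro a
    have h : ∑ y, jAY ν a y = ∑ y, ∑ b, ν a b y := rfl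
    rw [h, Finset.sum_comm]
    rfl
  have hcondA : ∀ a : SA, IsProbVec (condA ν a) := by
    intro a
    constructor
    · intro y
      exact div_nonneg (Finset.sum_nonneg fun b _ => hν0 a b y) (hprA a).le
    · have : ∑ y, condA ν a y = (∑ y, jAY ν a y) / prA ν a := by
        rw [Finset.sum_div]; rfl
      rw [this, hjAYsum, div_self (hprA a).ne']
  -- positivity of the reported agreement
  set g : SB → ℝ := fun b => ∑ y, q y * condB ν b y / prY ν y with hg
  have hgpos : ∀ b, 0 < g b := by
    intro b
    obtain ⟨y0, hy0⟩ : ∃ y, 0 < q y := by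
      by_contra h
      push_neg at h
      have : ∑ y, q y ≤ 0 := Finset.sum_nonpos fun y _ => h y
      rw [hq.2] at this; linarith
    refine Finset.sum_pos' (fun y _ => ?_) ⟨y0, Finset.mem_univ y0, ?_⟩
    · exact div_nonneg (mul_nonneg (hq.1 y) (hBY b y).le) (hY y).le
    · exact div_pos (mul_pos hy0 (hBY b y0)) (hY y0)
  -- ∑_b jBY b y = prY y
  have hjBYsum : ∀ y, ∑ b, jBY ν b y = prY ν y := by
    intro y
    have h : ∑ b, jBY ν b y = ∑ b, ∑ a, ν a b y := rfl
    rw [h, Finset.sum_comm]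
    rfl
  -- key identity: ∑_b prB b * g b = 1
  have hsum1 : ∑ b, prB ν b * g b = 1 := by
    have h1 : ∀ b, prB ν b * g b = ∑ y, q y / prY ν y * (prB ν b * condB ν b y) := by
      intro b
      rw [hg, Finset.mul_sum]
      refine Finset.sum_congr rfl fun y _ => ?_
      ring
    calc ∑ b, prB ν b * g b
        = ∑ b, ∑ y, q y / prY ν y * (prB ν b * condB ν b y) := by
          exact Finset.sum_congr rfl fun b _ => h1 b
      _ = ∑ y, ∑ b, q y / prY ν y * (prB ν b * condB ν b y) := Finset.sum_comm
      _ = ∑ y, q y := by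
          refine Finset.sum_congr rfl fun y _ => ?_
          rw [← Finset.mul_sum]
          have hb : ∀ b, prB ν b * condB ν b y = jBY ν b y := by
            intro b
            have hpb := (hprB b).ne'
            unfold condB
            field_simp
          rw [Finset.sum_congr rfl fun b _ => hb b, hjBYsum]
          rw [div_mul_cancel₀ _ (hY y).ne']
      _ = 1 := hq.2
  -- conditional independence identity for K
  have hKeq : ∀ a b, (∑ y, condA ν a y * condB ν b y / prY ν y) = K ν a b := by
    intro a b
    have hν' : ∀ y, ν a b y = jAY ν a y * jBY ν b y / prY ν y := by
      intro y
      have hy := (hY y).ne'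
      have h := hci a b y
      rw [eq_div_iff hy]
      rw [div_eq_iff hy] at h
      rw [h]
      field_simp
    have hjab : jAB ν a b = ∑ y, jAY ν a y * jBY ν b y / prY ν y := by
      unfold jAB
      exact Finset.sum_congr rfl fun y _ => hν' y
    unfold K
    rw [hjab, Finset.sum_div]
    refine Finset.sum_congr rfl fun y _ => ?_
    unfold condA condB
    field_simp
  -- set weights
  set w : SB → ℝ := fun b => jAB ν a0 b / prA ν a0 with hw
  have hwpos : ∀ b, 0 < w b := fun b => div_pos (hAB a0 b) (hprA a0)
  have hwsum : ∑ b, w b = 1 := by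
    rw [hw]
    have h : prA ν a0 = ∑ b, jAB ν a0 b := rfl
    rw [← Finset.sum_div, ← h, div_self (hprA a0).ne']
  have hwK : ∀ b, w b / K ν a0 b = prB ν b := by
    intro b
    rw [hw]
    unfold K
    have h1 := (hAB a0 b).ne'
    have h2 := (hprA a0).ne'
    have h3 := (hprB b).ne'
    field_simp
  -- rule out g = K everywhere via stability
  have hgK : ∃ b, g b ≠ K ν a0 b := by
    by_contra h
    push_neg at h
    set A : SA → S → ℝ := fun xa y => if xa = a0 then q y else condA ν xa y with hA
    have hApv : ∀ xa, IsProbVec (A xa) := by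
      intro xa
      by_cases hxa : xa = a0
      · simpa [hA, hxa] using hq
      · simpa [hA, hxa] using hcondA xa
    have hAsol : ∀ xa xb, (∑ y, A xa y * condB ν xb y / prY ν y) = K ν xa xb := by
      intro xa xb
      by_cases hxa : xa = a0
      · subst hxa
        simpa [hA] using h xb
      · simp only [hA, if_neg hxa]
        exact hKeq xa xb
    have := hst.2 A hApv hAsol a0
    apply hne
    funext y
    have h' := this y
    simpa [hA] using h'
  obtain ⟨b0, hb0⟩ := hgK
  -- pointwise: w b * log (g b) - w b * log (K b) ≤ prB b * g b - w b, strict at b0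
  have hle : ∀ b, w b * Real.log (g b) - w b * Real.log (K ν a0 b)
      ≤ prB ν b * g b - w b := by
    intro b
    have h1 : Real.log (g b) - Real.log (K ν a0 b) = Real.log (g b / K ν a0 b) :=
      (Real.log_div (hgpos b).ne' (hK b).ne').symm
    have h2 : Real.log (g b / K ν a0 b) ≤ g b / K ν a0 b - 1 :=
      Real.log_le_sub_one_of_pos (div_pos (hgpos b) (hK b))
    have h3 : w b * (g b / K ν a0 b) = prB ν b * g b := by
      rw [← hwK b]; ring
    nlinarith [hwpos b, mul_le_mul_of_nonneg_left h2 (hwpos b).le]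
  have hlt : w b0 * Real.log (g b0) - w b0 * Real.log (K ν a0 b0)
      < prB ν b0 * g b0 - w b0 := by
    have h1 : Real.log (g b0) - Real.log (K ν a0 b0) = Real.log (g b0 / K ν a0 b0) :=
      (Real.log_div (hgpos b0).ne' (hK b0).ne').symm
    have hne1 : g b0 / K ν a0 b0 ≠ 1 := by
      intro hc
      exact hb0 ((div_eq_one_iff_eq (hK b0).ne').mp hc)
    have h2 : Real.log (g b0 / K ν a0 b0) < g b0 / K ν a0 b0 - 1 :=
      Real.log_lt_sub_one_of_pos (div_pos (hgpos b0) (hK b0)) hne1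
    have h3 : w b0 * (g b0 / K ν a0 b0) = prB ν b0 * g b0 := by
      rw [← hwK b0]; ring
    nlinarith [hwpos b0, mul_lt_mul_of_pos_left h2 (hwpos b0)]
  have hmain : ∑ b, (w b * Real.log (g b) - w b * Real.log (K ν a0 b))
      < ∑ b, (prB ν b * g b - w b) := by
    refine Finset.sum_lt_sum (fun b _ => hle b) ⟨b0, Finset.mem_univ b0, hlt⟩
  rw [Finset.sum_sub_distrib, Finset.sum_sub_distrib, hsum1, hwsum] at hmain
  have : ∑ b, w b * Real.log (g b) - ∑ b, w b * Real.log (K ν a0 b) < 0 := by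
    linarith
  linarith
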